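/- If 0 ≤ α < β ≤ 1, then there exists δ > 0 such that for every f ∈ X_β, the function w^δ f belongs to X_α. -/

import Mathlib

open MeasureTheory
open scoped ENNReal


/-- Points of ℝ^d written as `(x', x_d) ∈ ℝ^{d-1} × ℝ`. -/
abbrev Pt (d : ℕ) := EuclideanSpace ℝ (Fin (d - 1)) × ℝ

/-- The weight `w(x) = max(1, |x'|^d, |x_d + |x'|²|^d)`. -/
noncomputable def wW (d : ℕ) (x : Pt d) : ℝ :=
  max 1 (max (‖x.1‖ ^ d) (|x.2 + ‖x.1‖ ^ 2| ^ d))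

lemma wW_one_le (d : ℕ) (x : Pt d) : 1 ≤ wW d x := le_max_left _ _

lemma wW_pos (d : ℕ) (x : Pt d) : 0 < wW d x := lt_of_lt_of_le one_pos (wW_one_le d x)

lemma wW_continuous (d : ℕ) : Continuous (wW d) := by
  apply Continuous.max continuous_const
  apply Continuous.max
  · exact ((continuous_norm.comp continuous_fst)).pow d
  · exact (((continuous_snd.add ((continuous_norm.comp continuous_fst).pow 2)).abs)).pow d

lemma wW_measurable (d : ℕ) : Measurable (wW d) := (wW_continuous d).measurable

/-- finiteness of `∫ (1+‖x‖)/2) ^ (-r)` -/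
lemma lint_lt_top {E : Type*} [NormedAddCommGroup E] [NormedSpace ℝ E] [FiniteDimensional ℝ E]
    [MeasureSpace E] [BorelSpace E]
    [Measure.IsAddHaarMeasure (volume : Measure E)] {r : ℝ}
    (hr : (Module.finrank ℝ E : ℝ) < r) :
    ∫⁻ x : E, ENNReal.ofReal (((1 + ‖x‖) / 2) ^ (-r)) < ⊤ := by
  have hint := (integrable_one_add_norm (μ := (volume : Measure E)) hr).const_mul ((2:ℝ) ^ r)
  have hfin := hint.2
  refine lt_of_le_of_lt (lintegral_mono fun x => ?_) hfin
  have h0 : (0:ℝ) < 1 + ‖x‖ := by positivity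
  have : ((1 + ‖x‖) / 2) ^ (-r) = (2:ℝ) ^ r * (1 + ‖x‖) ^ (-r) := by
    rw [Real.div_rpow h0.le (by norm_num), Real.rpow_neg (by norm_num : (0:ℝ) ≤ 2),
      div_eq_mul_inv, inv_inv, mul_comm]
  rw [this, ← ofReal_norm]
  exact ENNReal.ofReal_le_ofReal (le_abs_self _)

lemma key_integral (d : ℕ) (hd : 2 ≤ d) :
    ∫⁻ x : Pt d, ENNReal.ofReal ((wW d x) ^ (-((2*(d:ℝ)+1)/(2*(d:ℝ))))) < ⊤ := by
  have hd0 : (0:ℝ) < d := by exact_mod_cast Nat.lt_of_lt_of_le Nat.zero_lt_two hd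
  have hd2 : (2:ℝ) ≤ d := by exact_mod_cast hd
  set e₁ : ℝ := (d:ℝ) - 3/4 with he₁
  set e₂ : ℝ := 5/4 with he₂
  set F : EuclideanSpace ℝ (Fin (d-1)) → ℝ≥0∞ :=
    fun y => ENNReal.ofReal (((1 + ‖y‖) / 2) ^ (-e₁)) with hF
  set G : ℝ → ℝ≥0∞ := fun t => ENNReal.ofReal (((1 + |t|) / 2) ^ (-e₂)) with hG
  have hFmeas : Measurable F := by
    apply ENNReal.measurable_ofReal.comp
    apply Continuous.measurable
    exact ((continuous_const.add continuous_norm).div_const 2).rpow_const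
      (fun y => Or.inl (by rw [Pi.add_apply]; positivity))
  have hGmeas : Measurable G := by
    apply ENNReal.measurable_ofReal.comp
    apply Continuous.measurable
    exact ((continuous_const.add (continuous_abs)).div_const 2).rpow_const
      (fun y => Or.inl (by rw [Pi.add_apply]; positivity))
  -- pointwise bound
  have hpt : ∀ x : Pt d, ENNReal.ofReal ((wW d x) ^ (-((2*(d:ℝ)+1)/(2*(d:ℝ))))) ≤
      F x.1 * G (x.2 + ‖x.1‖ ^ 2) := by
    intro x
    set A := ‖x.1‖ with hA
    set B := |x.2 + ‖x.1‖ ^ 2| with hB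
    have hA0 : 0 ≤ A := norm_nonneg _
    have hB0 : 0 ≤ B := abs_nonneg _
    have hw1 : 1 ≤ wW d x := wW_one_le d x
    have hw0 : 0 < wW d x := wW_pos d x
    have h1 : ((1 + A)/2) ^ d ≤ wW d x := by
      rcases le_total A 1 with h | h
      · calc ((1 + A)/2) ^ d ≤ 1 ^ d := by
              apply pow_le_pow_left₀ (by positivity); linarith
            _ ≤ wW d x := by rw [one_pow]; exact hw1
      · calc ((1 + A)/2) ^ d ≤ A ^ d := by
              apply pow_le_pow_left₀ (by positivity); linarith
            _ ≤ wW d x := le_trans (le_max_left _ _) (le_max_right _ _)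
    have h2 : ((1 + B)/2) ^ d ≤ wW d x := by
      rcases le_total B 1 with h | h
      · calc ((1 + B)/2) ^ d ≤ 1 ^ d := by
              apply pow_le_pow_left₀ (by positivity); linarith
            _ ≤ wW d x := by rw [one_pow]; exact hw1
      · calc ((1 + B)/2) ^ d ≤ B ^ d := by
              apply pow_le_pow_left₀ (by positivity); linarith
            _ ≤ wW d x := le_trans (le_max_right _ _) (le_max_right _ _)
    -- split exponent
    have hsplit : (wW d x) ^ (-((2*(d:ℝ)+1)/(2*(d:ℝ)))) =
        (wW d x) ^ (-(e₁/d)) * (wW d x) ^ (-(e₂/d)) := by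
      rw [← Real.rpow_add hw0]
      congr 1
      field_simp
      ring
    have key1 : (wW d x) ^ (-(e₁/d)) ≤ ((1 + A)/2) ^ (-e₁) := by
      have := Real.rpow_le_rpow_of_nonpos (by positivity) h1
        (by rw [neg_nonpos]; apply div_nonneg _ hd0.le; rw [he₁]; linarith : -(e₁/d) ≤ 0)
      calc (wW d x) ^ (-(e₁/d)) ≤ (((1 + A)/2) ^ d) ^ (-(e₁/d)) := this
        _ = ((1 + A)/2) ^ (-e₁) := by
            rw [← Real.rpow_natCast ((1+A)/2) d, ← Real.rpow_mul (by positivity)]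
            congr 1
            field_simp
    have key2 : (wW d x) ^ (-(e₂/d)) ≤ ((1 + B)/2) ^ (-e₂) := by
      have := Real.rpow_le_rpow_of_nonpos (by positivity) h2
        (by rw [neg_nonpos]; positivity : -(e₂/d) ≤ 0)
      calc (wW d x) ^ (-(e₂/d)) ≤ (((1 + B)/2) ^ d) ^ (-(e₂/d)) := this
        _ = ((1 + B)/2) ^ (-e₂) := by
            rw [← Real.rpow_natCast ((1+B)/2) d, ← Real.rpow_mul (by positivity)]
            congr 1
            field_simp
    calc ENNReal.ofReal ((wW d x) ^ (-((2*(d:ℝ)+1)/(2*(d:ℝ)))))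
        ≤ ENNReal.ofReal (((1+A)/2) ^ (-e₁) * ((1+B)/2) ^ (-e₂)) := by
          apply ENNReal.ofReal_le_ofReal
          rw [hsplit]
          exact mul_le_mul key1 key2 (Real.rpow_nonneg (by positivity) _) (by positivity)
      _ = F x.1 * G (x.2 + ‖x.1‖ ^ 2) := by
          rw [ENNReal.ofReal_mul (by positivity)]
  -- Tonelli
  have hprodmeas : AEMeasurable (fun z : Pt d => F z.1 * G (z.2 + ‖z.1‖ ^ 2))
      ((volume : Measure (EuclideanSpace ℝ (Fin (d-1)))).prod (volume : Measure ℝ)) := by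
    apply Measurable.aemeasurable
    apply Measurable.mul (hFmeas.comp measurable_fst)
    exact hGmeas.comp (measurable_snd.add ((measurable_norm.comp measurable_fst).pow_const 2))
  calc ∫⁻ x : Pt d, ENNReal.ofReal ((wW d x) ^ (-((2*(d:ℝ)+1)/(2*(d:ℝ)))))
      ≤ ∫⁻ x : Pt d, F x.1 * G (x.2 + ‖x.1‖ ^ 2) := lintegral_mono hpt
    _ = ∫⁻ y, ∫⁻ t, F y * G (t + ‖y‖ ^ 2) := by
        rw [Measure.volume_eq_prod, lintegral_prod _ hprodmeas]
    _ = (∫⁻ y, F y) * ∫⁻ t, G t := by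
        rw [← lintegral_mul_const _ hFmeas]
        congr 1
        funext y
        rw [lintegral_const_mul _
          (show Measurable fun t => G (t + ‖y‖ ^ 2) from hGmeas.comp (measurable_add_const _))]
        congr 1
        exact lintegral_add_right_eq_self G (‖y‖ ^ 2)
    _ < ⊤ := by
        apply ENNReal.mul_lt_top
        · apply lint_lt_top
          rw [finrank_euclideanSpace, Fintype.card_fin]
          have : ((d - 1 : ℕ) : ℝ) = (d:ℝ) - 1 := by
            have : 1 ≤ d := le_trans one_le_two hd
            push_cast [this]; ring
          rw [this, he₁]; norm_num
        · have := lint_lt_top (E := ℝ) (r := e₂) ?_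
          · simpa [Real.norm_eq_abs] using this
          · rw [Module.finrank_self, he₂]; norm_num

/-- The exponent `p_t` with `p_t⁻¹ = (1-t)·d/(d+1)`; equals `∞` when `t = 1`. -/
noncomputable def pexp (d : ℕ) (t : ℝ) : ENNReal :=
  ENNReal.ofReal ((d : ℝ) + 1) / ENNReal.ofReal ((d : ℝ) * (1 - t))

/-- The norm `‖f‖_{X_t} = (∫ |f|^{p_t} w^{t p_t})^{1/p_t} = ‖f · w^t‖_{L^{p_t}}`. -/
noncomputable def Xnorm (d : ℕ) (t : ℝ) (f : Pt d → ℝ) : ENNReal :=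
  eLpNorm (fun x => f x * (wW d x) ^ t) (pexp d t) volume

lemma pexp_eq (d : ℕ) (hd0 : (0:ℝ) < d) {t : ℝ} (ht : t < 1) :
    pexp d t = ENNReal.ofReal (((d:ℝ)+1)/((d:ℝ)*(1-t))) := by
  rw [pexp, ← ENNReal.ofReal_div_of_pos (by nlinarith)]

/-- If `0 ≤ α < β ≤ 1`, there is `δ > 0` such that `w^δ f ∈ X_α` for every `f ∈ X_β`. -/
theorem Xnorm_gain_weight (d : ℕ) (hd : 2 ≤ d) (α β : ℝ)
    (hα : 0 ≤ α) (hαβ : α < β) (hβ : β ≤ 1) :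
    ∃ δ : ℝ, 0 < δ ∧ ∀ f : Pt d → ℝ, Xnorm d β f < ⊤ →
      Xnorm d α (fun x => (wW d x) ^ δ * f x) < ⊤ := by
  have hd0 : (0:ℝ) < d := by exact_mod_cast Nat.lt_of_lt_of_le Nat.zero_lt_two hd
  have hε : 0 < β - α := sub_pos.mpr hαβ
  refine ⟨(β - α) / (2*((d:ℝ)+1)), by positivity, ?_⟩
  intro f hf
  set δ : ℝ := (β - α) / (2*((d:ℝ)+1)) with hδdef
  have hδ0 : 0 < δ := by positivity
  set σ : ℝ := (β - α) - δ with hσdef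
  have h1α : 0 < 1 - α := by linarith
  set a : ℝ := ((d:ℝ)+1)/((d:ℝ)*(1-α)) with hadef
  have ha0 : 0 < a := by positivity
  have hpα : pexp d α = ENNReal.ofReal a := pexp_eq d hd0 (by linarith)
  have hpα0 : pexp d α ≠ 0 := by rw [hpα]; exact (ENNReal.ofReal_pos.mpr ha0).ne'
  have hpαtop : pexp d α ≠ ⊤ := by rw [hpα]; exact ENNReal.ofReal_ne_top
  have hpαre : (pexp d α).toReal = a := by rw [hpα, ENNReal.toReal_ofReal ha0.le]
  set s₀ : ℝ := (2*(d:ℝ)+1)/(2*(d:ℝ)) with hs₀def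
  -- integrand identity
  have hint : ∀ x : Pt d, ((‖((wW d x) ^ δ * f x) * (wW d x) ^ α‖₊ : ℝ≥0∞)) =
      ENNReal.ofReal (|f x| * (wW d x) ^ β) * ENNReal.ofReal ((wW d x) ^ (-σ)) := by
    intro x
    have hw0 := wW_pos d x
    rw [← ENNReal.ofReal_mul (by positivity), ← enorm_eq_nnnorm, ← ofReal_norm, Real.norm_eq_abs]
    congr 1
    rw [abs_mul, abs_mul, abs_of_pos (Real.rpow_pos_of_pos hw0 δ),
      abs_of_pos (Real.rpow_pos_of_pos hw0 α)]
    rw [mul_comm ((wW d x) ^ δ) |f x|, mul_assoc, mul_assoc, ← Real.rpow_add hw0,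
      ← Real.rpow_add hw0]
    congr 1
    rw [hσdef]; ring
  have hofℕ : ∀ x : Pt d, ENNReal.ofReal (|f x| * (wW d x) ^ β) =
      (‖f x * (wW d x) ^ β‖₊ : ℝ≥0∞) := by
    intro x
    rw [← enorm_eq_nnnorm, ← ofReal_norm, Real.norm_eq_abs, abs_mul,
      abs_of_pos (Real.rpow_pos_of_pos (wW_pos d x) β)]
  have hkey := key_integral d hd
  have hHmeas : Measurable fun x : Pt d => ENNReal.ofReal ((wW d x) ^ (-s₀)) := by
    apply ENNReal.measurable_ofReal.comp
    apply Continuous.measurable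
    exact (wW_continuous d).rpow_const fun x => Or.inl (wW_pos d x).ne'
  simp only [Xnorm] at hf ⊢
  rw [eLpNorm_eq_lintegral_rpow_enorm hpα0 hpαtop, hpαre]
  refine ENNReal.rpow_lt_top_of_nonneg (by positivity) (lt_top_iff_ne_top.mp ?_)
  rcases lt_or_eq_of_le hβ with hβ1 | hβ1
  · -- case β < 1
    have h1β : 0 < 1 - β := by linarith
    set b : ℝ := ((d:ℝ)+1)/((d:ℝ)*(1-β)) with hbdef
    have hb0 : 0 < b := by positivity
    have hpβ : pexp d β = ENNReal.ofReal b := pexp_eq d hd0 hβ1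
    have hab : a < b := by
      rw [hadef, hbdef]
      apply div_lt_div_of_pos_left (by positivity) (by positivity)
      nlinarith
    set u : ℝ := b / a with hudef
    have hu1 : 1 < u := (one_lt_div ha0).mpr hab
    set v : ℝ := ((d:ℝ)+1)/((d:ℝ)*(β-α)*a) with hvdef
    have hv0 : 0 < v := by positivity
    have hconj : u.HolderConjugate v := by
      refine Real.holderConjugate_iff.mpr ⟨hu1, ?_⟩
      rw [hudef, hvdef, hadef, hbdef]
      field_simp
      ring
    have hau : a * u = b := by
      rw [hudef]; field_simp
    have hsav : (-σ) * (a * v) = -s₀ := by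
      rw [hσdef, hδdef, hvdef, hadef, hs₀def]
      field_simp
      ring
    have hb_int : ∫⁻ x : Pt d, (‖f x * (wW d x) ^ β‖₊ : ℝ≥0∞) ^ b < ⊤ := by
      rw [eLpNorm_eq_lintegral_rpow_enorm (by rw [hpβ]; exact (ENNReal.ofReal_pos.mpr hb0).ne')
        (by rw [hpβ]; exact ENNReal.ofReal_ne_top), hpβ, ENNReal.toReal_ofReal hb0.le] at hf
      exact (ENNReal.rpow_lt_top_iff_of_pos (by positivity)).mp hf
    calc ∫⁻ x : Pt d, (‖((wW d x) ^ δ * f x) * (wW d x) ^ α‖₊ : ℝ≥0∞) ^ a ∂volume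
        ≤ ∫⁻ x : Pt d, ((‖f x * (wW d x) ^ β‖₊ : ℝ≥0∞) ^ b
            + ENNReal.ofReal ((wW d x) ^ (-s₀))) ∂volume := by
          apply lintegral_mono
          intro x
          dsimp only
          have hw0 := wW_pos d x
          rw [hint x, ENNReal.mul_rpow_of_nonneg _ _ ha0.le]
          set X := ENNReal.ofReal (|f x| * (wW d x) ^ β) with hX
          set Y := ENNReal.ofReal ((wW d x) ^ (-σ)) with hY
          calc X ^ a * Y ^ a
              ≤ (X ^ a) ^ u / ENNReal.ofReal u + (Y ^ a) ^ v / ENNReal.ofReal v :=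
                ENNReal.young_inequality _ _ hconj
            _ ≤ (X ^ a) ^ u + (Y ^ a) ^ v := by
                refine add_le_add (ENNReal.div_le_of_le_mul ?_) (ENNReal.div_le_of_le_mul ?_)
                · exact le_mul_of_one_le_right bot_le (ENNReal.one_le_ofReal.mpr hu1.le)
                · exact le_mul_of_one_le_right bot_le (ENNReal.one_le_ofReal.mpr (Real.holderConjugate_iff.mp hconj.symm).1.le)
            _ = (‖f x * (wW d x) ^ β‖₊ : ℝ≥0∞) ^ b + ENNReal.ofReal ((wW d x) ^ (-s₀)) := by
                congr 1
                · rw [← ENNReal.rpow_mul, hau, hX, hofℕ x]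
                · rw [← ENNReal.rpow_mul, hY,
                    ENNReal.ofReal_rpow_of_nonneg (Real.rpow_nonneg hw0.le _) (by positivity),
                    ← Real.rpow_mul hw0.le, hsav]
      _ = (∫⁻ x : Pt d, (‖f x * (wW d x) ^ β‖₊ : ℝ≥0∞) ^ b ∂volume)
            + ∫⁻ x : Pt d, ENNReal.ofReal ((wW d x) ^ (-s₀)) ∂volume :=
          lintegral_add_right _ hHmeas
      _ < ⊤ := ENNReal.add_lt_top.mpr ⟨hb_int, hkey⟩
  · -- case β = 1
    subst hβ1
    have hptop : pexp d 1 = ⊤ := by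
      rw [pexp, show (d:ℝ)*(1-1) = 0 by ring, ENNReal.ofReal_zero,
        ENNReal.div_zero (ENNReal.ofReal_pos.mpr (by positivity : (0:ℝ) < (d:ℝ)+1)).ne']
    rw [hptop, eLpNorm_exponent_top] at hf
    set C := eLpNormEssSup (fun x : Pt d => f x * (wW d x) ^ (1:ℝ)) volume with hC
    have hae := enorm_ae_le_eLpNormEssSup (fun x : Pt d => f x * (wW d x) ^ (1:ℝ)) volume
    have hsa : (-σ) * a = -s₀ := by
      rw [hσdef, hδdef, hadef, hs₀def]
      field_simp
      ring
    calc ∫⁻ x : Pt d, (‖((wW d x) ^ δ * f x) * (wW d x) ^ (α:ℝ)‖₊ : ℝ≥0∞) ^ a ∂volume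
        ≤ ∫⁻ x : Pt d, C ^ a * ENNReal.ofReal ((wW d x) ^ (-s₀)) ∂volume := by
          apply lintegral_mono_ae
          filter_upwards [hae] with x hx
          have hw0 := wW_pos d x
          rw [hint x, ENNReal.mul_rpow_of_nonneg _ _ ha0.le]
          refine mul_le_mul' (ENNReal.rpow_le_rpow ?_ ha0.le) (le_of_eq ?_)
          · rw [hofℕ x]; exact hx
          · rw [ENNReal.ofReal_rpow_of_nonneg (Real.rpow_nonneg hw0.le _) ha0.le,
              ← Real.rpow_mul hw0.le, hsa]
      _ = C ^ a * ∫⁻ x : Pt d, ENNReal.ofReal ((wW d x) ^ (-s₀)) ∂volume :=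
          lintegral_const_mul _ hHmeas
      _ < ⊤ := ENNReal.mul_lt_top
          (ENNReal.rpow_lt_top_of_nonneg ha0.le hf.ne) hkey
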